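/- Let X be a compact metric space, f : X → X continuous, x, y ∈ X, N > 0, and t > 0. If liminf_{n→∞} (1/n)#{0 ≤ i < n : d(f^i x, f^i y) < t} = 0, then liminf_{n→∞} (1/n)#{0 ≤ i < n : d((f^N)^i x, (f^N)^i y) < t} = 0. -/

import Mathlib

open Filter Set
open scoped Classical

/-- Lower density of times `i < n` with `dist (f^[i] x) (f^[i] y) < t`. -/
noncomputable def ldens {X : Type*} [MetricSpace X] (f : X → X) (x y : X) (t : ℝ) : ℝ :=
  Filter.liminf (fun n : ℕ =>
    (((Finset.range n).filter (fun i => dist (f^[i] x) (f^[i] y) < t)).card : ℝ) / n)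
    Filter.atTop

/-- Upper density of times `i < n` with `dist (f^[i] x) (f^[i] y) < t`. -/
noncomputable def udens {X : Type*} [MetricSpace X] (f : X → X) (x y : X) (t : ℝ) : ℝ :=
  Filter.limsup (fun n : ℕ =>
    (((Finset.range n).filter (fun i => dist (f^[i] x) (f^[i] y) < t)).card : ℝ) / n)
    Filter.atTop

/-- Lower density along the sequence of times `q i`. -/
noncomputable def ldensSeq {X : Type*} [MetricSpace X] (f : X → X) (q : ℕ → ℕ)
    (x y : X) (t : ℝ) : ℝ :=
  Filter.liminf (fun n : ℕ =>
    (((Finset.range n).filter (fun i => dist (f^[q i] x) (f^[q i] y) < t)).card : ℝ) / n)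
    Filter.atTop

/-- Upper density along the sequence of times `q i`. -/
noncomputable def udensSeq {X : Type*} [MetricSpace X] (f : X → X) (q : ℕ → ℕ)
    (x y : X) (t : ℝ) : ℝ :=
  Filter.limsup (fun n : ℕ =>
    (((Finset.range n).filter (fun i => dist (f^[q i] x) (f^[q i] y) < t)).card : ℝ) / n)
    Filter.atTop

theorem stmt_7 {X : Type*} [MetricSpace X] [CompactSpace X]
    (f : X → X) (hf : Continuous f) (x y : X) (N : ℕ) (hN : 0 < N)
    (t : ℝ) (ht : 0 < t) (h : ldens f x y t = 0) :
    ldens (f^[N]) x y t = 0 := by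
  classical
  set A : ℕ → ℕ := fun n =>
    ((Finset.range n).filter (fun i => dist (f^[i] x) (f^[i] y) < t)).card with hA
  set B : ℕ → ℕ := fun n =>
    ((Finset.range n).filter (fun i => dist ((f^[N])^[i] x) ((f^[N])^[i] y) < t)).card with hB
  set a : ℕ → ℝ := fun n => (A n : ℝ) / n with ha
  set b : ℕ → ℝ := fun n => (B n : ℝ) / n with hb
  have hiter : ∀ i : ℕ, (f^[N])^[i] = f^[N * i] := by
    intro i; rw [Function.iterate_mul]
  -- B n ≤ A (N * n)
  have key1 : ∀ n, B n ≤ A (N * n) := by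
    intro n
    apply Finset.card_le_card_of_injOn (fun i => N * i)
    · intro i hi
      simp only [Finset.mem_coe, Finset.mem_filter, Finset.mem_range, hiter] at hi ⊢
      exact ⟨(Nat.mul_lt_mul_left hN).2 hi.1, hi.2⟩
    · intro i _ j _ hij
      exact Nat.eq_of_mul_eq_mul_left hN hij
  -- A m' ≤ A m + (m' - m)
  have key2 : ∀ m m' : ℕ, m ≤ m' → A m' ≤ A m + (m' - m) := by
    intro m m' hmm
    have hsub : (Finset.range m').filter (fun i => dist (f^[i] x) (f^[i] y) < t) ⊆
        ((Finset.range m).filter (fun i => dist (f^[i] x) (f^[i] y) < t)) ∪ Finset.Ico m m' := by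
      intro i hi
      simp only [Finset.mem_filter, Finset.mem_range, Finset.mem_union, Finset.mem_Ico] at hi ⊢
      rcases lt_or_ge i m with h' | h'
      · exact Or.inl ⟨h', hi.2⟩
      · exact Or.inr ⟨h', hi.1⟩
    calc A m' ≤ _ := Finset.card_le_card hsub
      _ ≤ A m + (Finset.Ico m m').card := Finset.card_union_le _ _
      _ = A m + (m' - m) := by rw [Nat.card_Ico]
  have hBle : ∀ n, B n ≤ n := fun n =>
    (Finset.card_filter_le _ _).trans (Finset.card_range n).le
  have hb_nonneg : ∀ n, 0 ≤ b n := fun n => by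
    exact div_nonneg (Nat.cast_nonneg _) (Nat.cast_nonneg _)
  have hb_le_one : ∀ n, b n ≤ 1 := by
    intro n
    rcases Nat.eq_zero_or_pos n with rfl | hn
    · simp [hb]
    · rw [hb]
      rw [div_le_one (by exact_mod_cast hn)]
      exact_mod_cast hBle n
  have ha_nonneg : ∀ n, 0 ≤ a n := fun n =>
    div_nonneg (Nat.cast_nonneg _) (Nat.cast_nonneg _)
  have hAle : ∀ n, A n ≤ n := fun n =>
    (Finset.card_filter_le _ _).trans (Finset.card_range n).le
  have ha_le_one : ∀ n, a n ≤ 1 := by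
    intro n
    rcases Nat.eq_zero_or_pos n with rfl | hn
    · simp [ha]
    · rw [ha, div_le_one (by exact_mod_cast hn)]
      exact_mod_cast hAle n
  have hb_bdd : IsBoundedUnder (· ≤ ·) atTop b := Filter.isBoundedUnder_of ⟨1, hb_le_one⟩
  have hb_bdd_below : IsBoundedUnder (· ≥ ·) atTop b := Filter.isBoundedUnder_of ⟨0, hb_nonneg⟩
  have ha_bdd : IsBoundedUnder (· ≤ ·) atTop a := Filter.isBoundedUnder_of ⟨1, ha_le_one⟩
  have hLa : Filter.liminf a atTop = 0 := h
  -- key frequently statement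
  have hfreq : ∀ ε : ℝ, 0 < ε → ∃ᶠ n in atTop, b n < ε := by
    intro ε hε
    have hε' : (0:ℝ) < ε / (2 * N) := by positivity
    have hfa : ∃ᶠ m in atTop, a m < ε / (2 * N) := by
      apply Filter.frequently_lt_of_liminf_lt ha_bdd.isCoboundedUnder_ge
      rw [hLa]; exact hε'
    obtain ⟨M, hM⟩ := exists_nat_gt (2 * (N:ℝ)^2 / ε)
    rw [Filter.frequently_atTop] at hfa ⊢
    intro k
    obtain ⟨m, hm, ham⟩ := hfa (max (max M (N * k)) 1)
    have hmM : M ≤ m := le_trans (le_max_left _ _) (le_trans (le_max_left _ _) hm)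
    have hmk : N * k ≤ m := le_trans (le_max_right _ _) (le_trans (le_max_left _ _) hm)
    have hm1 : 1 ≤ m := le_trans (le_max_right _ _) hm
    set n := m / N + 1 with hn
    have hnk : k ≤ n := by
      have : k ≤ m / N := Nat.le_div_iff_mul_le hN |>.2 (by linarith [hmk, Nat.mul_comm N k] <;> omega)
      omega
    refine ⟨n, hnk, ?_⟩
    have hmn : m ≤ N * n := by
      have : m < (m / N + 1) * N := (Nat.div_lt_iff_lt_mul hN).1 (Nat.lt_succ_self _)
      exact le_of_lt (calc m < (m / N + 1) * N := this
        _ = N * n := by ring)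
    have hNn : N * n ≤ m + N := by
      have : N * (m / N) ≤ m := Nat.mul_div_le m N
      calc N * n = N * (m / N) + N := by ring
        _ ≤ m + N := by omega
    -- B n ≤ A m + N
    have hBn : B n ≤ A m + N := by
      calc B n ≤ A (N * n) := key1 n
        _ ≤ A m + (N * n - m) := key2 m (N * n) hmn
        _ ≤ A m + N := by omega
    -- real estimates
    have hmR : (0:ℝ) < m := by exact_mod_cast hm1
    have hnR : (0:ℝ) < n := by positivity
    have hNR : (0:ℝ) < N := by exact_mod_cast hN
    have hmnR : (m:ℝ) / N ≤ n := by
      rw [div_le_iff₀ hNR]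
      have : (m:ℝ) ≤ N * n := by exact_mod_cast hmn
      linarith
    have hBnR : (B n : ℝ) ≤ (A m : ℝ) + N := by exact_mod_cast hBn
    have step1 : b n ≤ ((A m : ℝ) + N) / ((m:ℝ) / N) := by
      apply div_le_div₀ (by positivity) hBnR (by positivity) hmnR
    have step2 : ((A m : ℝ) + N) / ((m:ℝ) / N) = N * a m + N^2 / m := by
      rw [ha]
      field_simp
    have hAm : N * a m < ε / 2 := by
      have := ham
      have h2N : (0:ℝ) < 2 * N := by positivity
      calc N * a m < N * (ε / (2 * N)) := by
            apply mul_lt_mul_of_pos_left ham hNR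
        _ = ε / 2 := by field_simp
    have hN2 : (N:ℝ)^2 / m < ε / 2 := by
      have hmM' : (2 * (N:ℝ)^2 / ε) < m := lt_of_lt_of_le hM (by exact_mod_cast hmM)
      rw [div_lt_iff₀ hmR]
      rw [div_lt_iff₀ hε] at hmM'
      nlinarith
    calc b n ≤ N * a m + N^2 / m := step1.trans_eq step2
      _ < ε := by linarith
  -- conclude
  have hle : Filter.liminf b atTop ≤ 0 := by
    apply le_of_forall_pos_le_add
    intro ε hε
    rw [zero_add]
    exact Filter.liminf_le_of_frequently_le ((hfreq ε hε).mono fun n hn => hn.le) hb_bdd_below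
  have hge : (0:ℝ) ≤ Filter.liminf b atTop := by
    apply Filter.le_liminf_of_le (hb_bdd.isCoboundedUnder_ge)
    exact Filter.Eventually.of_forall hb_nonneg
  exact le_antisymm hle hge
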